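/- Fix constants σ̄ > σ̃ > 0 and α > 0. Then the function F(R) = α·σ̄·P_0(R)/(α + R·P_0(R)) − σ̃/2 is strictly decreasing on (0, ∞) and has a unique positive zero R*. -/

import Mathlib

open Real Filter Set

/-- Modified Bessel function of the first kind of (integer) order `n`. -/
noncomputable def besselI (n : ℕ) (r : ℝ) : ℝ :=
  ∑' k : ℕ, (1 / (k.factorial * Real.Gamma (n + k + 1))) * (r / 2) ^ (n + 2 * k)

/-- `P n r = I_{n+1}(r) / (r * I_n(r))`. -/
noncomputable def P (n : ℕ) (r : ℝ) : ℝ := besselI (n + 1) r / (r * besselI n r)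

noncomputable def cc (k : ℕ) : ℝ := 1 / ((k.factorial : ℝ) * k.factorial)
noncomputable def dd (k : ℕ) : ℝ := 1 / ((k.factorial : ℝ) * (k+1).factorial)
noncomputable def ff (x : ℝ) : ℝ := ∑' k : ℕ, cc k * x ^ k
noncomputable def gg (x : ℝ) : ℝ := ∑' k : ℕ, dd k * x ^ k

lemma cc_pos (k : ℕ) : 0 < cc k := by unfold cc; positivity

lemma dd_pos (k : ℕ) : 0 < dd k := by unfold dd; positivity

lemma dd_eq (k : ℕ) : dd k = cc k / (k + 1) := by
  unfold cc dd
  rw [Nat.factorial_succ]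
  push_cast
  field_simp

lemma dd_le_cc (k : ℕ) : dd k ≤ cc k := by
  rw [dd_eq]
  have := cc_pos k
  rw [div_le_iff₀ (by positivity)]
  nlinarith

lemma cc_le (k : ℕ) : cc k ≤ 1 / (k.factorial : ℝ) := by
  unfold cc
  have h1 : (1:ℝ) ≤ (k.factorial : ℝ) := by exact_mod_cast k.factorial_pos
  rw [div_le_div_iff₀ (by positivity) (by positivity)]
  nlinarith

lemma summable_cc {x : ℝ} (hx : 0 ≤ x) : Summable fun k : ℕ => cc k * x ^ k := by
  apply Summable.of_nonneg_of_le (fun k => mul_nonneg (cc_pos k).le (by positivity))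
    (fun k => ?_) (Real.summable_pow_div_factorial x)
  rw [div_eq_mul_one_div, mul_comm (x ^ k)]
  exact mul_le_mul_of_nonneg_right (cc_le k) (by positivity)

lemma summable_dd {x : ℝ} (hx : 0 ≤ x) : Summable fun k : ℕ => dd k * x ^ k := by
  apply Summable.of_nonneg_of_le (fun k => mul_nonneg (dd_pos k).le (by positivity)) (fun k => ?_) (summable_cc hx)
  exact mul_le_mul_of_nonneg_right (dd_le_cc k) (by positivity)

lemma ff_pos {x : ℝ} (hx : 0 ≤ x) : 0 < ff x := by
  apply Summable.tsum_pos (summable_cc hx) (fun k => mul_nonneg (cc_pos k).le (by positivity)) 0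
  simp [cc]

lemma gg_pos {x : ℝ} (hx : 0 ≤ x) : 0 < gg x := by
  apply Summable.tsum_pos (summable_dd hx) (fun k => mul_nonneg (dd_pos k).le (by positivity)) 0
  simp [dd]

lemma gg_le_ff {x : ℝ} (hx : 0 ≤ x) : gg x ≤ ff x :=
  Summable.tsum_le_tsum (fun k => mul_le_mul_of_nonneg_right (dd_le_cc k) (by positivity))
    (summable_dd hx) (summable_cc hx)

lemma coeff_cross {k l : ℕ} (hkl : k < l) : 0 < dd k * cc l - dd l * cc k := by
  rw [dd_eq, dd_eq]
  have h1 : (0:ℝ) < k + 1 := by positivity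
  have h2 : (0:ℝ) < l + 1 := by positivity
  have h3 : (k:ℝ) + 1 < (l:ℝ) + 1 := by exact_mod_cast Nat.succ_lt_succ hkl
  have hck := cc_pos k
  have hcl := cc_pos l
  have : cc k / ((k:ℝ)+1) * cc l = cc k * cc l / ((k:ℝ)+1) := by ring
  rw [this]
  have : cc l / ((l:ℝ)+1) * cc k = cc k * cc l / ((l:ℝ)+1) := by ring
  rw [this]
  have hpos : 0 < cc k * cc l := mul_pos hck hcl
  have := div_lt_div_of_pos_left hpos h1 h3
  linarith

lemma pow_cross {x y : ℝ} (hx : 0 < x) (hxy : x < y) {k l : ℕ} (hkl : k < l) :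
    0 < x ^ k * y ^ l - y ^ k * x ^ l := by
  have hy : 0 < y := hx.trans hxy
  obtain ⟨m, rfl⟩ := Nat.exists_eq_add_of_lt hkl
  have hp : x ^ (m + 1) < y ^ (m + 1) := pow_lt_pow_left₀ hxy hx.le (Nat.succ_ne_zero m)
  have hkk : 0 < x ^ k * y ^ k := by positivity
  have h := mul_lt_mul_of_pos_left hp hkk
  have e1 : x ^ k * y ^ (k + m + 1) = x ^ k * y ^ k * y ^ (m + 1) := by ring
  have e2 : y ^ k * x ^ (k + m + 1) = x ^ k * y ^ k * x ^ (m + 1) := by ring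
  rw [e1, e2]
  linarith

set_option maxHeartbeats 1000000 in
lemma cross {x y : ℝ} (hx : 0 < x) (hxy : x < y) : gg y * ff x < gg x * ff y := by
  have hy : 0 < y := hx.trans hxy
  set A : ℕ × ℕ → ℝ := fun p => (dd p.1 * x ^ p.1) * (cc p.2 * y ^ p.2) with hA_def
  set B : ℕ × ℕ → ℝ := fun p => (dd p.1 * y ^ p.1) * (cc p.2 * x ^ p.2) with hB_def
  have hsA : Summable A :=
    (summable_dd hx.le).mul_of_nonneg (summable_cc hy.le)
      (fun k => mul_nonneg (dd_pos k).le (by positivity))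
      (fun k => mul_nonneg (cc_pos k).le (by positivity))
  have hsB : Summable B :=
    (summable_dd hy.le).mul_of_nonneg (summable_cc hx.le)
      (fun k => mul_nonneg (dd_pos k).le (by positivity))
      (fun k => mul_nonneg (cc_pos k).le (by positivity))
  have hnorm : ∀ {z : ℝ}, 0 ≤ z → Summable fun k : ℕ => ‖dd k * z ^ k‖ := by
    intro z hz
    exact summable_norm_iff.mpr (summable_dd hz)
  have hnorm' : ∀ {z : ℝ}, 0 ≤ z → Summable fun k : ℕ => ‖cc k * z ^ k‖ := by
    intro z hz
    exact summable_norm_iff.mpr (summable_cc hz)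
  have hgf1 : gg x * ff y = ∑' p : ℕ × ℕ, A p :=
    tsum_mul_tsum_of_summable_norm (hnorm hx.le) (hnorm' hy.le)
  have hgf2 : gg y * ff x = ∑' p : ℕ × ℕ, B p :=
    tsum_mul_tsum_of_summable_norm (hnorm hy.le) (hnorm' hx.le)
  set v : ℕ × ℕ → ℝ := fun p => A p - B p with hv_def
  have hsv : Summable v := hsA.sub hsB
  have hS : gg x * ff y - gg y * ff x = ∑' p, v p := by
    rw [hgf1, hgf2, Summable.tsum_sub hsA hsB]
  -- swap
  have hsvswap : Summable (fun p : ℕ × ℕ => v p.swap) :=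
    (Equiv.prodComm ℕ ℕ).summable_iff.mpr hsv
  have hswap : ∑' p : ℕ × ℕ, v p.swap = ∑' p, v p := (Equiv.prodComm ℕ ℕ).tsum_eq v
  set w : ℕ × ℕ → ℝ := fun p => v p + v p.swap with hw_def
  have hw_eq : ∀ k l : ℕ, w (k, l) =
      (dd k * cc l - dd l * cc k) * (x ^ k * y ^ l - y ^ k * x ^ l) := by
    intro k l
    simp only [hw_def, hv_def, hA_def, hB_def, Prod.swap]
    ring
  have hw_nonneg : ∀ p : ℕ × ℕ, 0 ≤ w p := by
    rintro ⟨k, l⟩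
    rcases lt_trichotomy k l with h | h | h
    · rw [hw_eq]
      exact le_of_lt (mul_pos (coeff_cross h) (pow_cross hx hxy h))
    · subst h; rw [hw_eq]; ring_nf; exact le_refl 0
      -- becomes 0 ≤ 0 or similar
    · rw [hw_eq]
      have h1 := coeff_cross h
      have h2 := pow_cross hx hxy h
      nlinarith
  have hw_pos : 0 < w (0, 1) := by
    rw [hw_eq]
    have h1 := coeff_cross (show (0:ℕ) < 1 by norm_num)
    have h2 := pow_cross hx hxy (show (0:ℕ) < 1 by norm_num)
    exact mul_pos h1 h2
  have hsw : Summable w := hsv.add hsvswap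
  have h2S : 0 < ∑' p, w p := Summable.tsum_pos hsw hw_nonneg (0, 1) hw_pos
  have : ∑' p, w p = 2 * ∑' p, v p := by
    rw [hw_def, Summable.tsum_add hsv hsvswap, hswap]; ring
  nlinarith [hS ▸ (this ▸ h2S)]

lemma besselI_zero (r : ℝ) : besselI 0 r = ff ((r / 2) ^ 2) := by
  unfold besselI ff
  congr 1
  funext k
  have h : ((0:ℕ):ℝ) + (k:ℝ) + 1 = (k:ℝ) + 1 := by push_cast; ring
  rw [h, Real.Gamma_nat_eq_factorial, ← pow_mul]
  unfold cc
  norm_num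

lemma besselI_one (r : ℝ) : besselI 1 r = (r / 2) * gg ((r / 2) ^ 2) := by
  unfold besselI gg
  rw [← tsum_mul_left]
  congr 1
  funext k
  have h : ((1:ℕ):ℝ) + (k:ℝ) + 1 = ((k+1 : ℕ):ℝ) + 1 := by push_cast; ring
  rw [h, Real.Gamma_nat_eq_factorial, ← pow_mul, pow_add]
  unfold dd
  push_cast
  ring

lemma P0_eq {r : ℝ} (hr : 0 < r) :
    P 0 r = gg ((r / 2) ^ 2) / (2 * ff ((r / 2) ^ 2)) := by
  have hf := ff_pos (x := (r / 2) ^ 2) (by positivity)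
  unfold P
  rw [besselI_one, besselI_zero]
  rw [div_eq_div_iff (by positivity) (by positivity)]
  ring

lemma P0_pos {r : ℝ} (hr : 0 < r) : 0 < P 0 r := by
  rw [P0_eq hr]
  have hf := ff_pos (x := (r / 2) ^ 2) (by positivity)
  have hg := gg_pos (x := (r / 2) ^ 2) (by positivity)
  positivity

lemma P0_le_half {r : ℝ} (hr : 0 < r) : P 0 r ≤ 1 / 2 := by
  rw [P0_eq hr]
  have hf := ff_pos (x := (r / 2) ^ 2) (by positivity)
  have hg := gg_le_ff (x := (r / 2) ^ 2) (by positivity)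
  rw [div_le_div_iff₀ (by positivity) (by norm_num)]
  linarith

lemma P0_anti : StrictAntiOn (fun r => P 0 r) (Ioi 0) := by
  intro r hr s hs hrs
  simp only [mem_Ioi] at hr hs
  have hx : (0:ℝ) < (r / 2) ^ 2 := by positivity
  have hxy : (r / 2) ^ 2 < (s / 2) ^ 2 := by nlinarith
  have hf1 := ff_pos (x := (r / 2) ^ 2) (by positivity)
  have hf2 := ff_pos (x := (s / 2) ^ 2) (by positivity)
  have hc := cross hx hxy
  simp only
  rw [P0_eq hr, P0_eq hs, div_lt_div_iff₀ (by positivity) (by positivity)]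
  nlinarith

lemma P0_lb {r : ℝ} (hr : 0 < r) (hr2 : r ≤ 1) :
    (1 - (r / 2) ^ 2) / 2 ≤ P 0 r := by
  set x := (r / 2) ^ 2 with hx_def
  have hx0 : 0 ≤ x := by positivity
  have hx1 : x < 1 := by rw [hx_def]; nlinarith
  have hg1 : 1 ≤ gg x := by
    have h := Summable.le_tsum (summable_dd hx0) 0
      (fun j _ => mul_nonneg (dd_pos j).le (by positivity))
    have e : dd 0 * x ^ 0 = 1 := by norm_num [dd]
    unfold gg
    rw [e] at h
    exact h
  have hfub : ff x ≤ (1 - x)⁻¹ := by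
    rw [← tsum_geometric_of_lt_one hx0 hx1]
    refine Summable.tsum_le_tsum (fun k => ?_) (summable_cc hx0)
      (summable_geometric_of_lt_one hx0 hx1)
    have h1 : cc k ≤ 1 := by
      have := cc_le k
      have h2 : (1:ℝ) ≤ (k.factorial : ℝ) := by exact_mod_cast k.factorial_pos
      calc cc k ≤ 1 / (k.factorial : ℝ) := this
        _ ≤ 1 := by rw [div_le_one (by positivity)]; exact h2
    nlinarith [pow_nonneg hx0 k]
  have hf := ff_pos hx0
  rw [P0_eq hr, ← hx_def]
  rw [div_le_div_iff₀ (by norm_num) (by positivity)]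
  have h3 : ff x * (1 - x) ≤ 1 := by
    have := mul_le_mul_of_nonneg_right hfub (le_of_lt (by linarith : (0:ℝ) < 1 - x))
    rwa [inv_mul_cancel₀ (by linarith : (1:ℝ) - x ≠ 0)] at this
  nlinarith

lemma cont_ff : Continuous ff := by
  rw [continuous_iff_continuousAt]
  intro x
  set X : ℝ := |x| + 1 with hX_def
  have hX0 : 0 < X := by positivity
  have hcont : ContinuousOn ff (Icc (-X) X) := by
    apply continuousOn_tsum (f := fun (k : ℕ) (t : ℝ) => cc k * t ^ k)
      (u := fun k => cc k * X ^ k)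
      (fun k => (continuous_const.mul (continuous_pow k)).continuousOn)
      (summable_cc hX0.le)
    intro n t ht
    rw [Real.norm_eq_abs, abs_mul, abs_of_pos (cc_pos n), abs_pow]
    apply mul_le_mul_of_nonneg_left _ (cc_pos n).le
    apply pow_le_pow_left₀ (abs_nonneg t) (abs_le.mpr ⟨ht.1, ht.2⟩)
  apply hcont.continuousAt (Icc_mem_nhds (by nlinarith [neg_abs_le x]) (by nlinarith [le_abs_self x]))

lemma cont_gg : Continuous gg := by
  rw [continuous_iff_continuousAt]
  intro x
  set X : ℝ := |x| + 1 with hX_def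
  have hX0 : 0 < X := by positivity
  have hcont : ContinuousOn gg (Icc (-X) X) := by
    apply continuousOn_tsum (f := fun (k : ℕ) (t : ℝ) => dd k * t ^ k)
      (u := fun k => dd k * X ^ k)
      (fun k => (continuous_const.mul (continuous_pow k)).continuousOn)
      (summable_dd hX0.le)
    intro n t ht
    rw [Real.norm_eq_abs, abs_mul, abs_of_pos (dd_pos n), abs_pow]
    apply mul_le_mul_of_nonneg_left _ (dd_pos n).le
    apply pow_le_pow_left₀ (abs_nonneg t) (abs_le.mpr ⟨ht.1, ht.2⟩)
  apply hcont.continuousAt (Icc_mem_nhds (by nlinarith [neg_abs_le x]) (by nlinarith [le_abs_self x]))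

lemma P0_cont : ContinuousOn (fun r => P 0 r) (Ioi 0) := by
  apply ContinuousOn.congr
    (f := fun r : ℝ => gg ((r / 2) ^ 2) / (2 * ff ((r / 2) ^ 2)))
  · apply ContinuousOn.div
    · exact (cont_gg.comp ((continuous_id.div_const 2).pow 2)).continuousOn
    · exact (continuous_const.mul (cont_ff.comp ((continuous_id.div_const 2).pow 2))).continuousOn
    · intro r _
      have := ff_pos (x := (r / 2) ^ 2) (by positivity)
      positivity
  · intro r hr
    exact P0_eq (mem_Ioi.mp hr)

lemma P0_small {ε : ℝ} (hε : 0 < ε) : ∃ r : ℝ, 0 < r ∧ P 0 r < ε := by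
  obtain ⟨N, hN⟩ := exists_nat_gt (1 / ε)
  have hNε : (1 : ℝ) / (N + 2) < ε := by
    rw [div_lt_iff₀ (by positivity)]
    rw [div_lt_iff₀ hε] at hN
    nlinarith
  set D : ℝ := ∑ k ∈ Finset.range (N + 1), dd k with hD_def
  have hD : 0 < D := Finset.sum_pos (fun k _ => dd_pos k) (by simp)
  have hcN := cc_pos (N + 1)
  set x : ℝ := max 1 (D / (cc (N + 1) * ε) + 1) with hx_def
  have hx1 : (1 : ℝ) ≤ x := le_max_left _ _
  have hx0 : (0 : ℝ) < x := lt_of_lt_of_le one_pos hx1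
  have hxD : D / (cc (N + 1) * ε) < x := lt_of_lt_of_le (by linarith) (le_max_right _ _)
  have hsum_if : Summable (fun k : ℕ => if k ≤ N then dd k * x ^ k else 0) := by
    apply Summable.of_nonneg_of_le (fun k => ?_) (fun k => ?_) (summable_dd hx0.le)
    · split <;> [exact mul_nonneg (dd_pos _).le (by positivity); exact le_refl 0]
    · split
      · exact le_refl _
      · exact mul_nonneg (dd_pos _).le (by positivity)
  have hsum1 : Summable (fun k : ℕ => cc k * x ^ k / (N + 2)) :=
    (summable_cc hx0.le).div_const _
  have key : ∀ k : ℕ, dd k * x ^ k ≤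
      cc k * x ^ k / (N + 2) + (if k ≤ N then dd k * x ^ k else 0) := by
    intro k
    by_cases hk : k ≤ N
    · rw [if_pos hk]
      have : (0:ℝ) ≤ cc k * x ^ k / (N + 2) := by
        have := cc_pos k; positivity
      linarith
    · rw [if_neg hk]
      push_neg at hk
      have hdk : dd k ≤ cc k / (N + 2) := by
        rw [dd_eq]
        have h1 : (0:ℝ) < (N:ℝ) + 2 := by positivity
        have h2 : (N:ℝ) + 2 ≤ (k:ℝ) + 1 := by
          have hkc : (N:ℝ) + 1 ≤ (k:ℝ) := by exact_mod_cast hk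
          linarith
        have := cc_pos k
        rw [div_le_div_iff₀ (by positivity) h1]
        nlinarith
      have hxk : (0:ℝ) ≤ x ^ k := by positivity
      calc dd k * x ^ k ≤ cc k / (N + 2) * x ^ k :=
            mul_le_mul_of_nonneg_right hdk hxk
        _ = cc k * x ^ k / (N + 2) + 0 := by ring
  have hif_eq : ∑' k : ℕ, (if k ≤ N then dd k * x ^ k else 0) =
      ∑ k ∈ Finset.range (N + 1), (if k ≤ N then dd k * x ^ k else 0) := by
    apply tsum_eq_sum
    intro b hb
    rw [if_neg]
    simpa using (by simpa using hb : ¬ b < N + 1)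
  have hgg : gg x ≤ ff x / (N + 2) + D * x ^ N := by
    have h1 : gg x ≤ ∑' k : ℕ, (cc k * x ^ k / (N + 2) + if k ≤ N then dd k * x ^ k else 0) :=
      Summable.tsum_le_tsum key (summable_dd hx0.le) (hsum1.add hsum_if)
    rw [Summable.tsum_add hsum1 hsum_if, hif_eq] at h1
    have h2 : ∑' k : ℕ, cc k * x ^ k / (N + 2) = ff x / (N + 2) := by
      unfold ff
      exact tsum_div_const
    have h3 : ∑ k ∈ Finset.range (N + 1), (if k ≤ N then dd k * x ^ k else 0) ≤ D * x ^ N := by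
      rw [hD_def, Finset.sum_mul]
      apply Finset.sum_le_sum
      intro k hk
      have hkN : k ≤ N := by simpa [Nat.lt_succ_iff] using hk
      rw [if_pos hkN]
      exact mul_le_mul_of_nonneg_left (pow_le_pow_right₀ hx1 hkN) (dd_pos k).le
    rw [h2] at h1
    linarith
  have hff_lb : cc (N + 1) * x ^ (N + 1) ≤ ff x :=
    Summable.le_tsum (summable_cc hx0.le) (N + 1)
      (fun j _ => mul_nonneg (cc_pos j).le (by positivity))
  refine ⟨2 * Real.sqrt x, by positivity, ?_⟩
  have hrx : ((2 * Real.sqrt x) / 2) ^ 2 = x := by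
    rw [show 2 * Real.sqrt x / 2 = Real.sqrt x by ring, Real.sq_sqrt hx0.le]
  rw [P0_eq (by positivity), hrx]
  have hf := ff_pos hx0.le
  rw [div_lt_iff₀ (by positivity)]
  have piece1 : ff x / (N + 2) ≤ ε * ff x := by
    rw [div_eq_mul_one_div]
    calc ff x * (1 / (N + 2)) ≤ ff x * ε := by
          apply mul_le_mul_of_nonneg_left hNε.le hf.le
      _ = ε * ff x := mul_comm _ _
  have piece2 : D * x ^ N < ε * ff x := by
    have hDx : D < cc (N + 1) * ε * x := by
      rw [div_lt_iff₀ (by positivity)] at hxD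
      linarith [hxD]
    have hxN : (0:ℝ) < x ^ N := by positivity
    calc D * x ^ N < (cc (N + 1) * ε * x) * x ^ N :=
          mul_lt_mul_of_pos_right hDx hxN
      _ = ε * (cc (N + 1) * x ^ (N + 1)) := by ring
      _ ≤ ε * ff x := mul_le_mul_of_nonneg_left hff_lb hε.le
  linarith

theorem F_strictAnti_unique_zero (σbar σtil α : ℝ)
    (hσ : σtil < σbar) (hσt : 0 < σtil) (hα : 0 < α) :
    StrictAntiOn (fun R : ℝ => α * σbar * P 0 R / (α + R * P 0 R) - σtil / 2) (Set.Ioi 0) ∧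
    ∃! R : ℝ, 0 < R ∧ α * σbar * P 0 R / (α + R * P 0 R) - σtil / 2 = 0 := by
  have hσb : 0 < σbar := hσt.trans hσ
  set F : ℝ → ℝ := fun R => α * σbar * P 0 R / (α + R * P 0 R) - σtil / 2 with hF_def
  have hanti : StrictAntiOn F (Set.Ioi 0) := by
    intro r hr s hs hrs
    simp only [mem_Ioi] at hr hs
    have hp := P0_pos hr
    have hq := P0_pos hs
    have hpq : P 0 s < P 0 r := P0_anti (mem_Ioi.mpr hr) (mem_Ioi.mpr hs) hrs
    have hd1 : 0 < α + r * P 0 r := by positivity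
    have hd2 : 0 < α + s * P 0 s := by positivity
    simp only [hF_def]
    have hmain : α * σbar * P 0 s / (α + s * P 0 s) < α * σbar * P 0 r / (α + r * P 0 r) := by
      rw [div_lt_div_iff₀ hd2 hd1]
      nlinarith [mul_pos (mul_pos hα hσb) (mul_pos hα (sub_pos.mpr hpq)),
        mul_pos (mul_pos hα hσb) (mul_pos (mul_pos hp hq) (sub_pos.mpr hrs))]
    linarith
  refine ⟨hanti, ?_⟩
  -- point with F > 0
  set K : ℝ := α * σbar / 4 + σtil / 2 with hK_def
  have hK : 0 < K := by positivity
  set r0 : ℝ := min 1 (α * (σbar - σtil) / (K + 1)) with hr0_def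
  have hr0pos : 0 < r0 :=
    lt_min one_pos (div_pos (mul_pos hα (sub_pos.mpr hσ)) (by positivity))
  have hr01 : r0 ≤ 1 := min_le_left _ _
  have hr0K : r0 * (K + 1) ≤ α * (σbar - σtil) := by
    have h := min_le_right 1 (α * (σbar - σtil) / (K + 1))
    rw [le_div_iff₀ (by positivity)] at h
    exact h
  have hFr0 : 0 < F r0 := by
    have hp := P0_pos hr0pos
    have hub := P0_le_half hr0pos
    have hlb := P0_lb hr0pos hr01
    have hd : 0 < α + r0 * P 0 r0 := by positivity
    simp only [hF_def]
    rw [sub_pos, lt_div_iff₀ hd]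
    -- σtil / 2 * (α + r0 * P 0 r0) < α * σbar * P 0 r0
    have hsq : r0 ^ 2 ≤ r0 := by nlinarith
    have hKe : r0 * (K + 1) = r0 * (α * σbar / 4 + σtil / 2) + r0 := by
      rw [hK_def]; ring
    have s3 : r0 * (α * σbar / 4 + σtil / 2) < α * (σbar - σtil) := by
      rw [hKe] at hr0K; linarith
    have s1 : σtil / 2 * (α + r0 * P 0 r0) ≤ σtil / 2 * (α + r0 * (1 / 2)) := by
      have h0 : r0 * P 0 r0 ≤ r0 * (1 / 2) := mul_le_mul_of_nonneg_left hub hr0pos.le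
      nlinarith
    have s2 : α * σbar * ((1 - (r0 / 2) ^ 2) / 2) ≤ α * σbar * P 0 r0 :=
      mul_le_mul_of_nonneg_left hlb (by positivity)
    have h4 : α * σbar / 8 * r0 ^ 2 ≤ α * σbar / 8 * r0 :=
      mul_le_mul_of_nonneg_left hsq (by positivity)
    nlinarith [s1, s2, s3, h4]
  -- point with F < 0
  obtain ⟨r1, hr1pos, hr1small⟩ := P0_small (show (0:ℝ) < σtil / (2 * σbar) by positivity)
  have hFr1 : F r1 < 0 := by
    have hq := P0_pos hr1pos
    have hd : 0 < α + r1 * P 0 r1 := by positivity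
    simp only [hF_def]
    rw [sub_neg, div_lt_iff₀ hd]
    have e1 : α * σbar * (σtil / (2 * σbar)) = α * σtil / 2 := by
      field_simp
    have e2 : α * σbar * P 0 r1 < α * σbar * (σtil / (2 * σbar)) :=
      mul_lt_mul_of_pos_left hr1small (by positivity)
    nlinarith [mul_pos hσt (mul_pos hr1pos hq)]
  have hr0r1 : r0 < r1 := by
    rcases lt_trichotomy r0 r1 with h | h | h
    · exact h
    · exfalso; rw [h] at hFr0; linarith
    · exfalso
      have := hanti (mem_Ioi.mpr hr1pos) (mem_Ioi.mpr hr0pos) h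
      linarith
  -- continuity of F on Icc r0 r1
  have hsub : Icc r0 r1 ⊆ Ioi 0 := fun t ht => lt_of_lt_of_le hr0pos ht.1
  have hPc : ContinuousOn (fun R => P 0 R) (Icc r0 r1) := P0_cont.mono hsub
  have hFcont : ContinuousOn F (Icc r0 r1) := by
    apply ContinuousOn.sub _ continuousOn_const
    apply ContinuousOn.div
    · exact continuousOn_const.mul hPc
    · exact continuousOn_const.add (continuousOn_id.mul hPc)
    · intro t ht
      have htpos : 0 < t := hsub ht
      have := P0_pos htpos
      positivity
  have hivt := intermediate_value_Icc' hr0r1.le hFcont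
  have h0mem : (0:ℝ) ∈ Icc (F r1) (F r0) := ⟨hFr1.le, hFr0.le⟩
  obtain ⟨c, hc, hFc⟩ := hivt h0mem
  have hcpos : 0 < c := lt_of_lt_of_le hr0pos hc.1
  refine ⟨c, ⟨hcpos, hFc⟩, ?_⟩
  rintro y ⟨hypos, hy⟩
  exact hanti.injOn (mem_Ioi.mpr hypos) (mem_Ioi.mpr hcpos) (by rw [show F y = 0 from hy, hFc])
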